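/- (Lemma B.2) Assume each ℓ_i is G_i-Lipschitz and convex. For any epoch k of shuffled SGD and any fixed v ∈ ℝⁿ, 𝒯₂ := (η_k/n)∑_{i=1}^m (v_k^{(i)} − y_k^{(i)})^⊤A_k^{(i)}(x_k − x_{k−1,i}) satisfies 𝒯₂ ≤ (η_k²√(Ĝ_{π^{(k)}}G̃_{π^{(k)}})/b)·‖y_k‖²_{Γ_k^{-1}} + (η_k²√(Ĝ_{π^{(k)}}G̃_{π^{(k)}})/(4b))·‖v_k − y_k‖²_{Γ_k^{-1}}. -/

import Mathlib

open Finset Matrix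

namespace SSGD

/-- squared Euclidean norm of a finite vector -/
noncomputable def sq {ι : Type*} [Fintype ι] (x : ι → ℝ) : ℝ := ∑ i, (x i) ^ 2

/-- Euclidean dot product -/
noncomputable def dot {ι : Type*} [Fintype ι] (x y : ι → ℝ) : ℝ := ∑ i, x i * y i

/-- weighted squared norm `‖u‖²_{(diag w)⁻¹} = ∑ i, (u i)² / w i` -/
noncomputable def wsq {ι : Type*} [Fintype ι] (w u : ι → ℝ) : ℝ := ∑ i, (u i) ^ 2 / w i

/-- operator (spectral) norm of a real matrix -/
noncomputable def opNorm {α β : Type*} [Fintype α] [Fintype β] [DecidableEq β]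
    (M : Matrix α β ℝ) : ℝ :=
  ‖LinearMap.toContinuousLinearMap (Matrix.toEuclideanLin M)‖

/-- `0`-based global index of the `j`-th element of the `i`-th batch of size `b` -/
def idx (b m : ℕ) (i : Fin m) (j : Fin b) : Fin (b * m) :=
  ⟨b * i.1 + j.1, by
    have hi : i.1 + 1 ≤ m := i.2
    have hj : j.1 < b := j.2
    calc b * i.1 + j.1 < b * i.1 + b := by omega
      _ = b * (i.1 + 1) := by ring
      _ ≤ b * m := Nat.mul_le_mul (le_refl b) hi⟩

/-- `I_{j↑}` : the identity matrix with its first `j` diagonal entries zeroed out -/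
noncomputable def Iup (n j : ℕ) : Matrix (Fin n) (Fin n) ℝ :=
  Matrix.diagonal fun i => if j ≤ i.1 then 1 else 0

/-- `I_{(j)}` (`j` 0-based) : diagonal matrix with ones exactly in positions
`b*j, …, b*(j+1)-1` -/
noncomputable def Iblk (n b j : ℕ) : Matrix (Fin n) (Fin n) ℝ :=
  Matrix.diagonal fun i => if b * j ≤ i.1 ∧ i.1 < b * (j + 1) then 1 else 0

variable {d b m : ℕ}

/-- the row-permuted data matrix `A_π` (row `i` of `A_π` is row `π i` of `A`) -/
def permMat (A : Matrix (Fin (b * m)) (Fin d) ℝ) (π : Equiv.Perm (Fin (b * m))) :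
    Matrix (Fin (b * m)) (Fin d) ℝ :=
  A.submatrix π id

/-- `Ĉ_π = (1/(m·n)) ‖W_π^{1/2} (∑_{j=1}^m I_{b(j-1)↑} A_π A_πᵀ I_{b(j-1)↑}) W_π^{1/2}‖₂`;
this is `L̂_π` for `w = L` and `Ĝ_π` for `w = G²`. -/
noncomputable def hatC (A : Matrix (Fin (b * m)) (Fin d) ℝ) (w : Fin (b * m) → ℝ)
    (π : Equiv.Perm (Fin (b * m))) : ℝ :=
  (1 / ((m : ℝ) * ((b * m : ℕ) : ℝ))) * opNorm
    (Matrix.diagonal (fun i => Real.sqrt (w (π i))) *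
      (∑ j : Fin m,
        Iup (b * m) (b * j.1) * (permMat A π * (permMat A π)ᵀ) * Iup (b * m) (b * j.1)) *
      Matrix.diagonal (fun i => Real.sqrt (w (π i))))

/-- `C̃_π = (1/b) ‖W_π^{1/2} (∑_{j=1}^m I_{(j)} A_π A_πᵀ I_{(j)}) W_π^{1/2}‖₂`;
this is `L̃_π` for `w = L` and `G̃_π` for `w = G²`. -/
noncomputable def tilC (A : Matrix (Fin (b * m)) (Fin d) ℝ) (w : Fin (b * m) → ℝ)
    (π : Equiv.Perm (Fin (b * m))) : ℝ :=
  (1 / (b : ℝ)) * opNorm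
    (Matrix.diagonal (fun i => Real.sqrt (w (π i))) *
      (∑ j : Fin m,
        Iblk (b * m) b j.1 * (permMat A π * (permMat A π)ᵀ) * Iblk (b * m) b j.1) *
      Matrix.diagonal (fun i => Real.sqrt (w (π i))))

/-- one inner (mini-batch) step of shuffled SGD, using the (sub)gradient selection `g` -/
noncomputable def step (A : Matrix (Fin (b * m)) (Fin d) ℝ) (g : Fin (b * m) → ℝ → ℝ)
    (η : ℝ) (π : Equiv.Perm (Fin (b * m))) (i : Fin m) (x : Fin d → ℝ) : Fin d → ℝ :=
  fun t => x t - (η / (b : ℝ)) *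
    ∑ j : Fin b, g (π (idx b m i j)) (dot (A (π (idx b m i j))) x) * A (π (idx b m i j)) t

/-- the primal iterates `x_{k-1,1}, …, x_{k-1,m+1}` within a single epoch
(`inIter A g η π x0 i` is `x_{k-1,i+1}`, so `inIter … 0 = x_{k-1}` and
`inIter … m = x_k`) -/
noncomputable def inIter (A : Matrix (Fin (b * m)) (Fin d) ℝ) (g : Fin (b * m) → ℝ → ℝ)
    (η : ℝ) (π : Equiv.Perm (Fin (b * m))) (x0 : Fin d → ℝ) : ℕ → Fin d → ℝ
  | 0 => x0
  | i + 1 =>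
    if h : i < m then step A g η π ⟨i, h⟩ (inIter A g η π x0 i) else inIter A g η π x0 i

/-- the dual vector `y_k` of one epoch, in permuted coordinates: its `p`-th entry is
`g_{π(p)}(a_{π(p)}ᵀ x_{k-1,i})` where `i` is the batch containing position `p` -/
noncomputable def dualY (A : Matrix (Fin (b * m)) (Fin d) ℝ) (g : Fin (b * m) → ℝ → ℝ)
    (η : ℝ) (π : Equiv.Perm (Fin (b * m))) (x0 : Fin d → ℝ) : Fin (b * m) → ℝ :=
  fun p => g (π p) (dot (A (π p)) (inIter A g η π x0 (p.1 / b)))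

/-- multi-epoch shuffled SGD: `xSeq A g η πs x0 k` is the iterate after `k` full epochs;
the (0-based) epoch `k` uses the permutation `πs k` and the step size `η k`. -/
noncomputable def xSeq (A : Matrix (Fin (b * m)) (Fin d) ℝ) (g : Fin (b * m) → ℝ → ℝ)
    (η : ℕ → ℝ) (πs : ℕ → Equiv.Perm (Fin (b * m))) (x0 : Fin d → ℝ) : ℕ → Fin d → ℝ
  | 0 => x0
  | k + 1 => inIter A g (η k) (πs k) (xSeq A g η πs x0 k) m

/-- the convex (Fenchel) conjugate of `f : ℝ → ℝ` -/
noncomputable def fconj (f : ℝ → ℝ) (y : ℝ) : ℝ := sSup (Set.range fun t => y * t - f t)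

/-- the Lagrangian `𝓛(x,y) = (1/n) ⟨A x, y⟩ - (1/n) ∑ᵢ ℓᵢ*(yⁱ)` -/
noncomputable def Lagr (A : Matrix (Fin (b * m)) (Fin d) ℝ) (ℓ : Fin (b * m) → ℝ → ℝ)
    (x : Fin d → ℝ) (y : Fin (b * m) → ℝ) : ℝ :=
  (1 / ((b * m : ℕ) : ℝ)) * ∑ i, dot (A i) x * y i
    - (1 / ((b * m : ℕ) : ℝ)) * ∑ i, fconj (ℓ i) (y i)

/-- `g` is a (global) subgradient of `f` at `t` -/
def IsSubgrad (f : ℝ → ℝ) (t g : ℝ) : Prop := ∀ s, f t + g * (s - t) ≤ f s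

/-- expectation with respect to the uniform distribution on a finite type -/
noncomputable def Eunif {α : Type*} [Fintype α] (F : α → ℝ) : ℝ :=
  (∑ a : α, F a) / (Fintype.card α : ℝ)

/-- extend a `K`-tuple of permutations to an `ℕ`-indexed sequence (by the identity) -/
def extSeq {K n : ℕ} (g : Fin K → Equiv.Perm (Fin n)) : ℕ → Equiv.Perm (Fin n) :=
  fun k => if h : k < K then g ⟨k, h⟩ else 1

-- ===================== auxiliary lemmas =====================
noncomputable def toCLM {α β : Type*} [Fintype α] [Fintype β] [DecidableEq β]
    (M : Matrix α β ℝ) : EuclideanSpace ℝ β →L[ℝ] EuclideanSpace ℝ α :=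
  LinearMap.toContinuousLinearMap (Matrix.toEuclideanLin M)

lemma opNorm_eq' {α β : Type*} [Fintype α] [Fintype β] [DecidableEq β]
    (M : Matrix α β ℝ) : opNorm M = ‖toCLM M‖ := rfl

lemma toCLM_mul {α β γ : Type*} [Fintype α] [Fintype β] [Fintype γ] [DecidableEq β]
    [DecidableEq γ] (M : Matrix α β ℝ) (N : Matrix β γ ℝ) :
    toCLM (M * N) = (toCLM M).comp (toCLM N) := by
  apply ContinuousLinearMap.ext
  intro x
  simp [toCLM, Matrix.toEuclideanLin_apply, Matrix.mulVec_mulVec]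

lemma opNorm_nonneg' {α β : Type*} [Fintype α] [Fintype β] [DecidableEq β]
    (M : Matrix α β ℝ) : 0 ≤ opNorm M := norm_nonneg _

lemma opNorm_mul_le {α β γ : Type*} [Fintype α] [Fintype β] [Fintype γ] [DecidableEq β]
    [DecidableEq γ] (M : Matrix α β ℝ) (N : Matrix β γ ℝ) :
    opNorm (M * N) ≤ opNorm M * opNorm N := by
  rw [opNorm_eq', toCLM_mul]; exact ContinuousLinearMap.opNorm_comp_le _ _

lemma toCLM_transpose_adjoint {α β : Type*} [Fintype α] [Fintype β] [DecidableEq α]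
    [DecidableEq β] (M : Matrix α β ℝ) :
    toCLM Mᵀ = ContinuousLinearMap.adjoint (toCLM M) := by
  have h := Matrix.toEuclideanLin_conjTranspose_eq_adjoint (𝕜 := ℝ) M
  have h2 : Mᴴ = Mᵀ := by ext i j; simp [Matrix.conjTranspose_apply]
  rw [h2] at h
  rw [toCLM, h, LinearMap.adjoint_toContinuousLinearMap]
  rfl

lemma opNorm_transpose {α β : Type*} [Fintype α] [Fintype β] [DecidableEq α]
    [DecidableEq β] (M : Matrix α β ℝ) : opNorm Mᵀ = opNorm M := by
  rw [opNorm_eq', opNorm_eq', toCLM_transpose_adjoint]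
  exact ContinuousLinearMap.adjoint.norm_map _

lemma opNorm_mul_transpose_self {α β : Type*} [Fintype α] [Fintype β] [DecidableEq α]
    [DecidableEq β] (M : Matrix α β ℝ) :
    opNorm (M * Mᵀ) = opNorm M * opNorm M := by
  rw [opNorm_eq', toCLM_mul]
  have h : toCLM M = ContinuousLinearMap.adjoint (toCLM Mᵀ) := by
    rw [toCLM_transpose_adjoint, ContinuousLinearMap.adjoint_adjoint]
  rw [h, ContinuousLinearMap.norm_adjoint_comp_self, ← opNorm_eq', opNorm_transpose]

lemma bilin_bound {α β : Type*} [Fintype α] [Fintype β] [DecidableEq β]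
    (M : Matrix α β ℝ) (x : α → ℝ) (y : β → ℝ) :
    |∑ p, ∑ q, x p * M p q * y q|
      ≤ opNorm M * (Real.sqrt (∑ p, x p ^ 2) * Real.sqrt (∑ q, y q ^ 2)) := by
  set x' : EuclideanSpace ℝ α := (WithLp.equiv 2 (α → ℝ)).symm x
  set y' : EuclideanSpace ℝ β := (WithLp.equiv 2 (β → ℝ)).symm y
  have hinner : (inner ℝ x' (toCLM M y') : ℝ) = ∑ p, ∑ q, x p * M p q * y q := by
    rw [PiLp.inner_apply]
    refine Finset.sum_congr rfl fun p _ => ?_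
    have happ : (toCLM M y') p = ∑ q, M p q * y q := by
      simp [toCLM, x', y', Matrix.toEuclideanLin_apply, Matrix.mulVec, dotProduct]
    simp only [happ, RCLike.inner_apply, starRingEnd_apply, star_trivial]
    rw [Finset.sum_mul]
    exact Finset.sum_congr rfl fun q _ => by simp [x']; ring
  have hx : ‖x'‖ = Real.sqrt (∑ p, x p ^ 2) := by
    rw [EuclideanSpace.norm_eq]
    congr 1
    exact Finset.sum_congr rfl fun p _ => by simp [x', sq_abs]
  have hy : ‖y'‖ = Real.sqrt (∑ q, y q ^ 2) := by
    rw [EuclideanSpace.norm_eq]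
    congr 1
    exact Finset.sum_congr rfl fun q _ => by simp [y', sq_abs]
  calc |∑ p, ∑ q, x p * M p q * y q| = |(inner ℝ x' (toCLM M y') : ℝ)| := by rw [hinner]
    _ ≤ ‖x'‖ * ‖toCLM M y'‖ := abs_real_inner_le_norm _ _
    _ ≤ ‖x'‖ * (‖toCLM M‖ * ‖y'‖) :=
        mul_le_mul_of_nonneg_left ((toCLM M).le_opNorm y') (norm_nonneg _)
    _ = opNorm M * (‖x'‖ * ‖y'‖) := by rw [opNorm_eq']; ring
    _ = _ := by rw [hx, hy]

lemma idx_div (hb : 0 < b) (i : Fin m) (j : Fin b) : (idx b m i j).1 / b = i.1 := by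
  show (b * i.1 + j.1) / b = i.1
  rw [Nat.mul_add_div hb, Nat.div_eq_of_lt j.2, Nat.add_zero]

lemma div_lt_m (p : Fin (b * m)) : p.1 / b < m := Nat.div_lt_of_lt_mul p.2

def batchEquiv (b m : ℕ) (hb : 0 < b) : Fin m × Fin b ≃ Fin (b * m) where
  toFun x := idx b m x.1 x.2
  invFun p := (⟨p.1 / b, div_lt_m p⟩, ⟨p.1 % b, Nat.mod_lt _ hb⟩)
  left_inv := fun x => by
    ext
    · exact idx_div hb x.1 x.2
    · show (b * x.1.1 + x.2.1) % b = x.2.1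
      rw [Nat.mul_add_mod, Nat.mod_eq_of_lt x.2.2]
  right_inv := fun p => Fin.ext (Nat.div_add_mod p.1 b)

lemma sum_batches (hb : 0 < b) (F : Fin (b * m) → ℝ) :
    ∑ i : Fin m, ∑ j : Fin b, F (idx b m i j) = ∑ p, F p := by
  rw [← Fintype.sum_prod_type']
  exact Fintype.sum_equiv (batchEquiv b m hb) _ _ (fun x => rfl)

lemma blk_mem_self (hb : 0 < b) (p : Fin (b * m)) :
    b * (p.1 / b) ≤ p.1 ∧ p.1 < b * (p.1 / b + 1) := by
  have h1 := Nat.div_add_mod p.1 b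
  have h2 := Nat.mod_lt p.1 hb
  constructor
  · omega
  · rw [Nat.mul_add, Nat.mul_one]; omega

lemma blk_eq_div (hb : 0 < b) (p : Fin (b * m)) (i : Fin m)
    (h : b * i.1 ≤ p.1 ∧ p.1 < b * (i.1 + 1)) : i.1 = p.1 / b := by
  have h1 : i.1 ≤ p.1 / b :=
    (Nat.le_div_iff_mul_le hb).2 (le_trans (le_of_eq (Nat.mul_comm i.1 b)) h.1)
  have h2 : p.1 / b < i.1 + 1 :=
    (Nat.div_lt_iff_lt_mul hb).2 (lt_of_lt_of_le h.2 (le_of_eq (Nat.mul_comm b (i.1 + 1))))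
  omega

lemma blk_uniq (hb : 0 < b) (p : Fin (b * m)) (f : Fin m → ℝ) :
    ∑ i : Fin m, (if b * i.1 ≤ p.1 ∧ p.1 < b * (i.1 + 1) then f i else 0)
      = f ⟨p.1 / b, div_lt_m p⟩ := by
  rw [Fintype.sum_eq_single (⟨p.1 / b, div_lt_m p⟩ : Fin m)]
  · rw [if_pos (blk_mem_self hb p)]
  · intro i hi
    rw [if_neg]
    intro h
    exact hi (Fin.ext (blk_eq_div hb p i h))

lemma le_iff_blk (i i' : Fin m) (j' : Fin b) :
    b * i.1 ≤ (idx b m i' j').1 ↔ i.1 ≤ i'.1 := by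
  show b * i.1 ≤ b * i'.1 + j'.1 ↔ _
  constructor
  · intro h
    by_contra hc
    push_neg at hc
    have h2 : b * (i'.1 + 1) ≤ b * i.1 := Nat.mul_le_mul_left b hc
    rw [Nat.mul_add, Nat.mul_one] at h2
    have := j'.2
    omega
  · intro h
    have : b * i.1 ≤ b * i'.1 := Nat.mul_le_mul_left b h
    omega

lemma telescope {d m : ℕ} (c : ℝ) (X : ℕ → Fin d → ℝ) (Z : Fin m → Fin d → ℝ)
    (hupd : ∀ i : Fin m, ∀ t, X (i.1 + 1) t = X i.1 t - c * Z i t) :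
    ∀ k, k ≤ m → ∀ t, X k t = X 0 t - c * ∑ i : Fin m, (if i.1 < k then Z i t else 0) := by
  intro k
  induction k with
  | zero => intro _ t; simp
  | succ k ih =>
    intro hk t
    have hkm : k < m := hk
    have h1 := hupd ⟨k, hkm⟩ t
    rw [h1, ih (le_of_lt hkm) t]
    have h2 : ∑ i : Fin m, (if i.1 < k + 1 then Z i t else 0)
        = (∑ i : Fin m, (if i.1 < k then Z i t else 0))
          + ∑ i : Fin m, (if i = ⟨k, hkm⟩ then Z i t else 0) := by
      rw [← Finset.sum_add_distrib]
      refine Finset.sum_congr rfl fun i _ => ?_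
      by_cases h3 : i = ⟨k, hkm⟩
      · subst h3
        simp
      · have h4 : i.1 ≠ k := fun he => h3 (Fin.ext he)
        rw [if_neg h3, add_zero]
        by_cases h5 : i.1 < k
        · rw [if_pos (by omega), if_pos h5]
        · rw [if_neg (by omega), if_neg h5]
    rw [h2, Finset.sum_ite_eq' Finset.univ (⟨k, hkm⟩ : Fin m) (fun i => Z i t),
      if_pos (Finset.mem_univ _)]
    ring


set_option maxHeartbeats 2000000

/-- **Lemma B.2**: bound on the second inner-product term `𝒯₂` for convex Lipschitz
losses, in terms of the permutation-dependent constants `Ĝ_π, G̃_π`. -/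
theorem stmt7
    (b m d : ℕ) (hb : 0 < b) (hm : 0 < m)
    (A : Matrix (Fin (b * m)) (Fin d) ℝ)
    (ℓ : Fin (b * m) → ℝ → ℝ) (G : Fin (b * m) → ℝ)
    (hG : ∀ i, 0 < G i)
    (hconv : ∀ i, ConvexOn ℝ Set.univ (ℓ i))
    (hLip : ∀ i s t, |ℓ i s - ℓ i t| ≤ G i * |s - t|)
    (η : ℝ) (hη : 0 < η)
    (π : Equiv.Perm (Fin (b * m)))
    (X : ℕ → Fin d → ℝ) (Y : Fin (b * m) → ℝ)
    (hY : ∀ p : Fin (b * m), IsSubgrad (ℓ (π p)) (dot (A (π p)) (X (p.1 / b))) (Y p))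
    (hupd : ∀ i : Fin m, ∀ t, X (i.1 + 1) t
      = X i.1 t - (η / (b : ℝ)) * ∑ j : Fin b, Y (idx b m i j) * A (π (idx b m i j)) t)
    (v : Fin (b * m) → ℝ) :
    let n : ℝ := ((b * m : ℕ) : ℝ)
    let c : ℝ := Real.sqrt (hatC A (fun i => (G i) ^ 2) π * tilC A (fun i => (G i) ^ 2) π)
    (η / n) * ∑ i : Fin m, ∑ j : Fin b,
        (v (π (idx b m i j)) - Y (idx b m i j))
          * dot (A (π (idx b m i j))) (fun t => X m t - X i.1 t)
      ≤ (η ^ 2 * c / (b : ℝ)) * wsq (fun p => (G (π p)) ^ 2) Y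
        + (η ^ 2 * c / (4 * (b : ℝ))) * wsq (fun p => (G (π p)) ^ 2)
            (fun p => v (π p) - Y p) := by
  intro n c
  classical
  have hb' : (0:ℝ) < (b:ℝ) := by exact_mod_cast hb
  have hm' : (0:ℝ) < (m:ℝ) := by exact_mod_cast hm
  have hnnat : (0:ℕ) < b * m := Nat.mul_pos hb hm
  have hn : (0:ℝ) < n := by show (0:ℝ) < ((b * m : ℕ) : ℝ); exact_mod_cast hnnat
  have hncast : n = (b:ℝ) * (m:ℝ) := by push_cast [n]; ring
  have hc0 : 0 ≤ c := Real.sqrt_nonneg _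
  have hcdef : c = Real.sqrt (hatC A (fun i => (G i) ^ 2) π * tilC A (fun i => (G i) ^ 2) π) := rfl
  have hndef : ((b * m : ℕ) : ℝ) = n := rfl
  set Aπ : Matrix (Fin (b * m)) (Fin d) ℝ := permMat A π with hAπ
  set P : Matrix (Fin (b * m)) (Fin (b * m)) ℝ := Aπ * Aπᵀ with hP
  have hPapp : ∀ p q : Fin (b * m), P p q = ∑ t, Aπ p t * Aπ q t := by
    intro p q; rw [hP, Matrix.mul_apply]
    exact Finset.sum_congr rfl fun t _ => by rw [Matrix.transpose_apply]
  have hPappA : ∀ p q : Fin (b * m), P p q = ∑ t, A (π p) t * A (π q) t := hPapp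
  set Gp : Fin (b * m) → ℝ := fun p => G (π p) with hGp
  have hGpos : ∀ p, 0 < Gp p := fun p => hG _
  set u : Fin (b * m) → ℝ := fun p => v (π p) - Y p with hu
  set Z : Fin m → Fin d → ℝ :=
    fun i t => ∑ j : Fin b, Y (idx b m i j) * A (π (idx b m i j)) t with hZ
  set MM : Matrix (Fin (b * m)) (Fin (b * m)) ℝ :=
    Matrix.of (fun p q => if b * (p.1 / b) ≤ q.1 then P p q else 0) with hMM
  set D : Matrix (Fin (b * m)) (Fin (b * m)) ℝ := Matrix.diagonal Gp with hD
  -- telescoping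
  have key : ∀ (i : Fin m) (t : Fin d),
      X m t - X i.1 t = -(η / (b:ℝ)) * ∑ i' : Fin m, (if i.1 ≤ i'.1 then Z i' t else 0) := by
    intro i t
    have e1 := telescope (η / (b:ℝ)) X Z (fun i t => hupd i t) m le_rfl t
    have e2 := telescope (η / (b:ℝ)) X Z (fun i t => hupd i t) i.1 (le_of_lt i.2) t
    rw [e1, e2]
    have h3 : ∑ i' : Fin m, (if i.1 ≤ i'.1 then Z i' t else 0)
        = (∑ i' : Fin m, (if i'.1 < m then Z i' t else 0))
          - ∑ i' : Fin m, (if i'.1 < i.1 then Z i' t else 0) := by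
      rw [← Finset.sum_sub_distrib]
      refine Finset.sum_congr rfl fun i' _ => ?_
      rw [if_pos i'.2]
      by_cases h : i.1 ≤ i'.1
      · rw [if_pos h, if_neg (by omega), sub_zero]
      · rw [if_neg h, if_pos (by omega), sub_self]
    rw [h3]; ring
  -- the inner product with a single data row
  have hdot : ∀ (i : Fin m) (j : Fin b),
      dot (A (π (idx b m i j))) (fun t => X m t - X i.1 t)
        = -(η / (b:ℝ)) * ∑ q : Fin (b*m),
            (if b * i.1 ≤ q.1 then P (idx b m i j) q * Y q else 0) := by
    intro i j
    show (∑ t, A (π (idx b m i j)) t * (X m t - X i.1 t)) = _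
    calc ∑ t, A (π (idx b m i j)) t * (X m t - X i.1 t)
        = ∑ t, -(η / (b:ℝ)) * ∑ i' : Fin m,
            (if i.1 ≤ i'.1 then A (π (idx b m i j)) t * Z i' t else 0) := by
          refine Finset.sum_congr rfl fun t _ => ?_
          rw [key i t, mul_left_comm]
          congr 1
          rw [Finset.mul_sum]
          exact Finset.sum_congr rfl fun i' _ => by split_ifs <;> simp
      _ = -(η / (b:ℝ)) * ∑ i' : Fin m, ∑ t,
            (if i.1 ≤ i'.1 then A (π (idx b m i j)) t * Z i' t else 0) := by
          rw [← Finset.mul_sum, Finset.sum_comm]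
      _ = -(η / (b:ℝ)) * ∑ i' : Fin m, ∑ j' : Fin b,
            (if b * i.1 ≤ (idx b m i' j').1
              then P (idx b m i j) (idx b m i' j') * Y (idx b m i' j') else 0) := by
          congr 1
          refine Finset.sum_congr rfl fun i' _ => ?_
          by_cases h : i.1 ≤ i'.1
          · rw [Finset.sum_congr rfl fun t (_ : t ∈ Finset.univ) => if_pos h,
              Finset.sum_congr rfl fun j' (_ : j' ∈ Finset.univ) =>
                if_pos ((le_iff_blk i i' j').2 h)]
            calc ∑ t, A (π (idx b m i j)) t * Z i' t
                = ∑ t, ∑ j' : Fin b, A (π (idx b m i j)) t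
                    * (Y (idx b m i' j') * A (π (idx b m i' j')) t) := by
                  refine Finset.sum_congr rfl fun t _ => ?_
                  rw [hZ]
                  exact Finset.mul_sum _ _ _
              _ = ∑ j' : Fin b, ∑ t, A (π (idx b m i j)) t
                    * (Y (idx b m i' j') * A (π (idx b m i' j')) t) := Finset.sum_comm
              _ = ∑ j' : Fin b, P (idx b m i j) (idx b m i' j') * Y (idx b m i' j') := by
                  refine Finset.sum_congr rfl fun j' _ => ?_
                  rw [hPappA, Finset.sum_mul]
                  exact Finset.sum_congr rfl fun t _ => by ring
          · rw [Finset.sum_congr rfl fun t (_ : t ∈ Finset.univ) => if_neg h,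
              Finset.sum_const_zero]
            symm
            apply Finset.sum_eq_zero
            intro j' _
            exact if_neg (fun hc => h ((le_iff_blk i i' j').1 hc))
      _ = -(η / (b:ℝ)) * ∑ q, (if b * i.1 ≤ q.1 then P (idx b m i j) q * Y q else 0) := by
          rw [sum_batches hb (fun q => if b * i.1 ≤ q.1 then P (idx b m i j) q * Y q else 0)]
  -- rewrite the LHS as a bilinear form
  have hLHS : (η / n) * ∑ i : Fin m, ∑ j : Fin b,
      (v (π (idx b m i j)) - Y (idx b m i j))
        * dot (A (π (idx b m i j))) (fun t => X m t - X i.1 t)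
      = -(η^2 / (n * (b:ℝ))) * ∑ p, ∑ q, u p * MM p q * Y q := by
    have h2 : ∀ (i : Fin m) (j : Fin b),
        (v (π (idx b m i j)) - Y (idx b m i j))
          * dot (A (π (idx b m i j))) (fun t => X m t - X i.1 t)
        = -(η / (b:ℝ)) * ∑ q, u (idx b m i j) * MM (idx b m i j) q * Y q := by
      intro i j
      rw [hdot i j, mul_left_comm]
      congr 1
      rw [Finset.mul_sum]
      refine Finset.sum_congr rfl fun q _ => ?_
      have hMq : MM (idx b m i j) q = if b * i.1 ≤ q.1 then P (idx b m i j) q else 0 := by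
        show (if b * ((idx b m i j).1 / b) ≤ q.1 then P (idx b m i j) q else 0) = _
        rw [idx_div hb]
      rw [hMq, hu]
      split_ifs with h
      · ring
      · simp
    calc (η / n) * ∑ i : Fin m, ∑ j : Fin b,
        (v (π (idx b m i j)) - Y (idx b m i j))
          * dot (A (π (idx b m i j))) (fun t => X m t - X i.1 t)
        = (η / n) * ∑ i : Fin m, ∑ j : Fin b,
            (-(η / (b:ℝ)) * ∑ q, u (idx b m i j) * MM (idx b m i j) q * Y q) := by
          congr 1
          exact Finset.sum_congr rfl fun i _ => Finset.sum_congr rfl fun j _ => h2 i j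
      _ = (η / n) * (-(η / (b:ℝ)) * ∑ p, ∑ q, u p * MM p q * Y q) := by
          congr 1
          rw [← sum_batches hb (fun p => ∑ q, u p * MM p q * Y q), Finset.mul_sum]
          exact Finset.sum_congr rfl fun i _ => (Finset.mul_sum _ _ _).symm
      _ = -(η^2 / (n * (b:ℝ))) * ∑ p, ∑ q, u p * MM p q * Y q := by
          field_simp
  -- entries of D-conjugated matrices
  have hDdiag : ∀ (M : Matrix (Fin (b*m)) (Fin (b*m)) ℝ) (p q : Fin (b*m)),
      (D * M * D) p q = Gp p * M p q * Gp q := by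
    intro M p q
    rw [hD, Matrix.mul_diagonal, Matrix.diagonal_mul]
  -- the auxiliary rectangular matrices
  set R : Matrix (Fin (b*m)) (Fin m × Fin d) ℝ :=
    Matrix.of (fun p it => (if b * it.1.1 ≤ p.1 ∧ p.1 < b * (it.1.1 + 1) then (1:ℝ) else 0)
      * (Gp p * Aπ p it.2)) with hR
  set S : Matrix (Fin (b*m)) (Fin m × Fin d) ℝ :=
    Matrix.of (fun p it => (if b * it.1.1 ≤ p.1 then (1:ℝ) else 0)
      * (Gp p * Aπ p it.2)) with hS
  have hinner : ∀ (c1 c2 : Fin m → ℝ) (p q : Fin (b*m)),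
      ∑ it : Fin m × Fin d, (c1 it.1 * (Gp p * Aπ p it.2)) * (c2 it.1 * (Gp q * Aπ q it.2))
        = ∑ i : Fin m, c1 i * c2 i * (Gp p * P p q * Gp q) := by
    intro c1 c2 p q
    rw [Fintype.sum_prod_type]
    refine Finset.sum_congr rfl fun i _ => ?_
    calc ∑ t, (c1 i * (Gp p * Aπ p t)) * (c2 i * (Gp q * Aπ q t))
        = ∑ t, c1 i * c2 i * (Gp p * Gp q) * (Aπ p t * Aπ q t) :=
          Finset.sum_congr rfl fun t _ => by ring
      _ = c1 i * c2 i * (Gp p * Gp q) * ∑ t, Aπ p t * Aπ q t := (Finset.mul_sum _ _ _).symm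
      _ = c1 i * c2 i * (Gp p * P p q * Gp q) := by rw [← hPapp]; ring
  have hRSt : R * Sᵀ = D * MM * D := by
    ext p q
    have lhs : (R * Sᵀ) p q = ∑ i : Fin m,
        (if b * i.1 ≤ p.1 ∧ p.1 < b * (i.1 + 1) then (1:ℝ) else 0)
          * (if b * i.1 ≤ q.1 then (1:ℝ) else 0) * (Gp p * P p q * Gp q) := by
      rw [Matrix.mul_apply]
      have hterm : ∀ it : Fin m × Fin d, R p it * Sᵀ it q
          = ((if b * it.1.1 ≤ p.1 ∧ p.1 < b * (it.1.1 + 1) then (1:ℝ) else 0)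
              * (Gp p * Aπ p it.2))
            * ((if b * it.1.1 ≤ q.1 then (1:ℝ) else 0) * (Gp q * Aπ q it.2)) := fun it => by
        rw [Matrix.transpose_apply]; rfl
      rw [Finset.sum_congr rfl fun it _ => hterm it]
      exact hinner (fun i => if b * i.1 ≤ p.1 ∧ p.1 < b * (i.1 + 1) then (1:ℝ) else 0)
        (fun i => if b * i.1 ≤ q.1 then (1:ℝ) else 0) p q
    rw [lhs, hDdiag]
    have hsplit : ∀ i : Fin m,
        (if b * i.1 ≤ p.1 ∧ p.1 < b * (i.1 + 1) then (1:ℝ) else 0)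
          * (if b * i.1 ≤ q.1 then (1:ℝ) else 0) * (Gp p * P p q * Gp q)
        = if b * i.1 ≤ p.1 ∧ p.1 < b * (i.1 + 1)
            then ((if b * i.1 ≤ q.1 then (1:ℝ) else 0) * (Gp p * P p q * Gp q)) else 0 :=
      fun i => by split_ifs <;> ring
    rw [Finset.sum_congr rfl fun i _ => hsplit i,
      blk_uniq hb p (fun i => (if b * i.1 ≤ q.1 then (1:ℝ) else 0) * (Gp p * P p q * Gp q))]
    show _ = Gp p * (if b * (p.1 / b) ≤ q.1 then P p q else 0) * Gp q
    split_ifs with h <;> ring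
  have hRRt : R * Rᵀ = D * (∑ j : Fin m, Iblk (b*m) b j.1 * P * Iblk (b*m) b j.1) * D := by
    ext p q
    have lhs : (R * Rᵀ) p q = ∑ i : Fin m,
        (if b * i.1 ≤ p.1 ∧ p.1 < b * (i.1 + 1) then (1:ℝ) else 0)
          * (if b * i.1 ≤ q.1 ∧ q.1 < b * (i.1 + 1) then (1:ℝ) else 0)
          * (Gp p * P p q * Gp q) := by
      rw [Matrix.mul_apply]
      have hterm : ∀ it : Fin m × Fin d, R p it * Rᵀ it q
          = ((if b * it.1.1 ≤ p.1 ∧ p.1 < b * (it.1.1 + 1) then (1:ℝ) else 0)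
              * (Gp p * Aπ p it.2))
            * ((if b * it.1.1 ≤ q.1 ∧ q.1 < b * (it.1.1 + 1) then (1:ℝ) else 0)
              * (Gp q * Aπ q it.2)) := fun it => by
        rw [Matrix.transpose_apply]; rfl
      rw [Finset.sum_congr rfl fun it _ => hterm it]
      exact hinner (fun i => if b * i.1 ≤ p.1 ∧ p.1 < b * (i.1 + 1) then (1:ℝ) else 0)
        (fun i => if b * i.1 ≤ q.1 ∧ q.1 < b * (i.1 + 1) then (1:ℝ) else 0) p q
    rw [lhs, hDdiag, Matrix.sum_apply, Finset.mul_sum, Finset.sum_mul]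
    refine Finset.sum_congr rfl fun i _ => ?_
    rw [Iblk, Matrix.mul_diagonal, Matrix.diagonal_mul]
    ring
  have hSSt : S * Sᵀ = D * (∑ j : Fin m, Iup (b*m) (b * j.1) * P * Iup (b*m) (b * j.1)) * D := by
    ext p q
    have lhs : (S * Sᵀ) p q = ∑ i : Fin m,
        (if b * i.1 ≤ p.1 then (1:ℝ) else 0)
          * (if b * i.1 ≤ q.1 then (1:ℝ) else 0) * (Gp p * P p q * Gp q) := by
      rw [Matrix.mul_apply]
      have hterm : ∀ it : Fin m × Fin d, S p it * Sᵀ it q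
          = ((if b * it.1.1 ≤ p.1 then (1:ℝ) else 0) * (Gp p * Aπ p it.2))
            * ((if b * it.1.1 ≤ q.1 then (1:ℝ) else 0) * (Gp q * Aπ q it.2)) := fun it => by
        rw [Matrix.transpose_apply]; rfl
      rw [Finset.sum_congr rfl fun it _ => hterm it]
      exact hinner (fun i => if b * i.1 ≤ p.1 then (1:ℝ) else 0)
        (fun i => if b * i.1 ≤ q.1 then (1:ℝ) else 0) p q
    rw [lhs, hDdiag, Matrix.sum_apply, Finset.mul_sum, Finset.sum_mul]
    refine Finset.sum_congr rfl fun i _ => ?_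
    rw [Iup, Matrix.mul_diagonal, Matrix.diagonal_mul]
    ring
  -- norm identities
  have hDiag : Matrix.diagonal (fun i : Fin (b*m) => Real.sqrt (G (π i) ^ 2)) = D := by
    rw [hD, hGp]
    have : (fun i : Fin (b*m) => Real.sqrt (G (π i) ^ 2)) = fun p => G (π p) :=
      funext fun i => Real.sqrt_sq (hG (π i)).le
    rw [this]
  have htil : opNorm (R * Rᵀ) = (b:ℝ) * tilC A (fun i => (G i) ^ 2) π := by
    rw [hRRt]
    simp only [tilC]
    rw [← hAπ, ← hP, hDiag]
    field_simp
  have hhat : opNorm (S * Sᵀ) = ((m:ℝ) * n) * hatC A (fun i => (G i) ^ 2) π := by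
    rw [hSSt]
    simp only [hatC]
    rw [← hAπ, ← hP, hDiag, hndef]
    field_simp
  have htil0 : 0 ≤ tilC A (fun i => (G i) ^ 2) π := by
    simp only [tilC]
    exact mul_nonneg (by positivity) (opNorm_nonneg' _)
  have hhat0 : 0 ≤ hatC A (fun i => (G i) ^ 2) π := by
    simp only [hatC]
    exact mul_nonneg (by positivity) (opNorm_nonneg' _)
  have hopRS : opNorm R * opNorm S = n * c := by
    have h1 : 0 ≤ opNorm R * opNorm S := mul_nonneg (opNorm_nonneg' R) (opNorm_nonneg' S)
    have h2 : (opNorm R * opNorm S)^2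
        = n^2 * (hatC A (fun i => (G i) ^ 2) π * tilC A (fun i => (G i) ^ 2) π) := by
      rw [mul_pow, pow_two, pow_two, ← opNorm_mul_transpose_self R,
        ← opNorm_mul_transpose_self S, htil, hhat, hncast]
      ring
    calc opNorm R * opNorm S = Real.sqrt ((opNorm R * opNorm S)^2) := (Real.sqrt_sq h1).symm
      _ = Real.sqrt (n^2 * (hatC A (fun i => (G i) ^ 2) π * tilC A (fun i => (G i) ^ 2) π)) := by
          rw [h2]
      _ = n * c := by
          rw [Real.sqrt_mul (sq_nonneg n), Real.sqrt_sq hn.le, hcdef]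
  have hDMDnorm : opNorm (D * MM * D) ≤ n * c := by
    rw [← hRSt]
    calc opNorm (R * Sᵀ) ≤ opNorm R * opNorm Sᵀ := opNorm_mul_le R Sᵀ
      _ = opNorm R * opNorm S := by rw [opNorm_transpose]
      _ = n * c := hopRS
  -- the bilinear bound
  set B : ℝ := ∑ p, ∑ q, u p * MM p q * Y q with hB
  set Su : ℝ := ∑ p, (u p / Gp p)^2 with hSu
  set Sy : ℝ := ∑ q, (Y q / Gp q)^2 with hSy
  have hSu0 : 0 ≤ Su := Finset.sum_nonneg fun p _ => sq_nonneg _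
  have hSy0 : 0 ≤ Sy := Finset.sum_nonneg fun q _ => sq_nonneg _
  have hBeq : B = ∑ p, ∑ q, (u p / Gp p) * (D * MM * D) p q * (Y q / Gp q) := by
    rw [hB]
    refine Finset.sum_congr rfl fun p _ => Finset.sum_congr rfl fun q _ => ?_
    rw [hDdiag]
    have h1 : Gp p ≠ 0 := (hGpos p).ne'
    have h2 : Gp q ≠ 0 := (hGpos q).ne'
    field_simp
  have habs : |B| ≤ opNorm (D * MM * D) * (Real.sqrt Su * Real.sqrt Sy) := by
    rw [hBeq, hSu, hSy]
    exact bilin_bound (D * MM * D) (fun p => u p / Gp p) (fun q => Y q / Gp q)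
  -- weighted norms
  have hWy : wsq (fun p => (G (π p)) ^ 2) Y = Sy := by
    rw [hSy]
    refine Finset.sum_congr rfl fun q _ => ?_
    rw [div_pow]
  have hWu : wsq (fun p => (G (π p)) ^ 2) u = Su := by
    rw [hSu]
    refine Finset.sum_congr rfl fun p _ => ?_
    rw [div_pow]
  -- assembling everything
  have hK : 0 ≤ η^2 / (n * (b:ℝ)) := by positivity
  have hK2 : 0 ≤ η^2 * c / (b:ℝ) := div_nonneg (mul_nonneg (sq_nonneg η) hc0) hb'.le
  calc (η / n) * ∑ i : Fin m, ∑ j : Fin b,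
      (v (π (idx b m i j)) - Y (idx b m i j))
        * dot (A (π (idx b m i j))) (fun t => X m t - X i.1 t)
      = -(η^2 / (n * (b:ℝ))) * B := hLHS
    _ = (η^2 / (n * (b:ℝ))) * (-B) := by ring
    _ ≤ (η^2 / (n * (b:ℝ))) * |B| := mul_le_mul_of_nonneg_left (neg_le_abs B) hK
    _ ≤ (η^2 / (n * (b:ℝ))) * (opNorm (D * MM * D) * (Real.sqrt Su * Real.sqrt Sy)) :=
        mul_le_mul_of_nonneg_left habs hK
    _ ≤ (η^2 / (n * (b:ℝ))) * ((n * c) * (Real.sqrt Su * Real.sqrt Sy)) := by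
        refine mul_le_mul_of_nonneg_left ?_ hK
        exact mul_le_mul_of_nonneg_right hDMDnorm
          (mul_nonneg (Real.sqrt_nonneg _) (Real.sqrt_nonneg _))
    _ = (η^2 * c / (b:ℝ)) * (Real.sqrt Su * Real.sqrt Sy) := by
        field_simp
    _ ≤ (η^2 * c / (b:ℝ)) * (Sy + Su / 4) := by
        refine mul_le_mul_of_nonneg_left ?_ hK2
        nlinarith [Real.sq_sqrt hSu0, Real.sq_sqrt hSy0,
          sq_nonneg (Real.sqrt Sy - Real.sqrt Su / 2),
          Real.sqrt_nonneg Su, Real.sqrt_nonneg Sy]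
    _ = (η ^ 2 * c / (b:ℝ)) * wsq (fun p => (G (π p)) ^ 2) Y
        + (η ^ 2 * c / (4 * (b:ℝ))) * wsq (fun p => (G (π p)) ^ 2) u := by
        rw [hWy, hWu]
        field_simp
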